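/- Let P ⊂ int(C) ∪ {0}, with P pointed closed convex cone and C a closed pointed convex cone with nonempty interior. There exists a constant M = M(C,P) ≥ 0 such that for all nonempty compact sets K1, K2 ⊂ R^p satisfying E(K_i,P) = E(K_i,C) (i = 1,2), the Hausdorff distance between minimal element sets satisfies H(E(K1,P), E(K2,P)) ≤ M · H(K1,K2). -/

import Mathlib

open Filter Topology Pointwise

/-- Contingent cone to `S` at `z`. -/
def contingentCone {E : Type*} [NormedAddCommGroup E] [NormedSpace ℝ E]
    (S : Set E) (z : E) : Set E :=
  {v | ∃ h : ℕ → ℝ, ∃ vk : ℕ → E, (∀ k, 0 < h k) ∧ Tendsto h atTop (𝓝 0) ∧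
    Tendsto vk atTop (𝓝 v) ∧ ∀ k, z + h k • vk k ∈ S}

/-- Recession cone of `S`. -/
def recessionCone {E : Type*} [NormedAddCommGroup E] [NormedSpace ℝ E]
    (S : Set E) : Set E :=
  {y | ∃ h : ℕ → ℝ, ∃ yk : ℕ → E, (∀ k, 0 < h k) ∧ Tendsto h atTop (𝓝 0) ∧
    (∀ k, yk k ∈ S) ∧ Tendsto (fun k => h k • yk k) atTop (𝓝 y)}

/-- Set of minimal elements of `S` with respect to the ordering cone `P`. -/
def minimalSet {E : Type*} [NormedAddCommGroup E] [NormedSpace ℝ E]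
    (S P : Set E) : Set E :=
  {y | y ∈ S ∧ ((fun d => y - d) '' P) ∩ S = {y}}

/-- Contingent derivative of a set-valued map `F` at `(x, y)` in direction `v`. -/
def contDeriv {X E : Type*} [NormedAddCommGroup X] [NormedSpace ℝ X]
    [NormedAddCommGroup E] [NormedSpace ℝ E]
    (F : X → Set E) (x : X) (y : E) (v : X) : Set E :=
  {w | ∃ h : ℕ → ℝ, ∃ vk : ℕ → X, ∃ wk : ℕ → E, (∀ k, 0 < h k) ∧
    Tendsto h atTop (𝓝 0) ∧ Tendsto vk atTop (𝓝 v) ∧ Tendsto wk atTop (𝓝 w) ∧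
    ∀ k, y + h k • wk k ∈ F (x + h k • vk k)}

/-- `F` is Lipschitz (with constant `l`) on a neighborhood of `x`. -/
def LipschitzAround {X E : Type*} [NormedAddCommGroup X] [NormedSpace ℝ X]
    [NormedAddCommGroup E] [NormedSpace ℝ E]
    (F : X → Set E) (x : X) (l : ℝ) : Prop :=
  ∃ O ∈ 𝓝 x, ∀ x1 ∈ O, ∀ x2 ∈ O,
    F x1 ⊆ F x2 + Metric.closedBall (0 : E) (l * ‖x1 - x2‖)

section StmtAux15
open Set Metric

variable {p : ℕ}

local notation "EE" => EuclideanSpace ℝ (Fin p)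

lemma image_sub_eq (P : Set EE) (z : EE) :
    (fun d => z - d) '' P = {x | z - x ∈ P} := by
  ext x
  constructor
  · rintro ⟨q, hq, rfl⟩
    simpa using hq
  · intro hx
    exact ⟨z - x, hx, sub_sub_cancel z x⟩

lemma cone_add {C : Set EE} (hconv : Convex ℝ C)
    (hcone : ∀ c : ℝ, 0 ≤ c → ∀ x ∈ C, c • x ∈ C) {a b : EE}
    (ha : a ∈ C) (hb : b ∈ C) : a + b ∈ C := by
  have h := hconv ha hb (by norm_num : (0:ℝ) ≤ 1/2) (by norm_num : (0:ℝ) ≤ 1/2) (by norm_num)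
  have h2 := hcone 2 (by norm_num) _ h
  convert h2 using 1
  module

lemma ext_stable {P : Set EE} (hconv : Convex ℝ P)
    (hcone : ∀ c : ℝ, 0 ≤ c → ∀ x ∈ P, c • x ∈ P) (hclosed : IsClosed P)
    (h0 : (0:EE) ∈ P) (hpointed : P ∩ (-P) = {0})
    {K : Set EE} (hK : IsCompact K) {y : EE} (hy : y ∈ K) :
    ∃ e, e ∈ minimalSet K P ∧ y - e ∈ P := by
  classical
  set A : Set EE := K ∩ {z | y - z ∈ P} with hA
  have hsecclosed : ∀ z : EE, IsClosed {x : EE | z - x ∈ P} := by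
    intro z
    have : {x : EE | z - x ∈ P} = (fun x => z - x) ⁻¹' P := rfl
    rw [this]
    exact hclosed.preimage (by fun_prop)
  have hAc : IsCompact A := hK.inter_right (hsecclosed y)
  have hAclosed : IsClosed A := hAc.isClosed
  have hAne : A.Nonempty := ⟨y, hy, by simp [h0]⟩
  -- sections
  set sec : EE → Set EE := fun z => A ∩ {x | z - x ∈ P} with hsec
  have hsec_self : ∀ z ∈ A, z ∈ sec z := fun z hz => ⟨hz, by simp [h0]⟩
  have hsec_mono : ∀ z w : EE, w - z ∈ P → sec z ⊆ sec w := by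
    intro z w hwz x hx
    refine ⟨hx.1, ?_⟩
    have := cone_add hconv hcone hwz hx.2
    have h2 : w - z + (z - x) = w - x := by abel
    rw [h2] at this
    exact this
  have hantisym : ∀ a b : EE, a - b ∈ P → b - a ∈ P → a = b := by
    intro a b hab hba
    have : a - b ∈ P ∩ (-P) := ⟨hab, by simpa using hba⟩
    rw [hpointed] at this
    have : a - b = 0 := this
    linear_combination (norm := module) this
  set S : Set (Set EE) := {B | ∃ z ∈ A, B = sec z} with hS
  have hkey : ∀ c ⊆ S, IsChain (· ⊆ ·) c → c.Nonempty → ∃ lb ∈ S, ∀ s ∈ c, lb ⊆ s := by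
    intro c hcS hchain hcne
    have hne : Nonempty ↥c := hcne.to_subtype
    have hdir : DirectedOn (· ⊇ ·) c := by
      intro a ha b hb
      rcases hchain.total ha hb with h | h
      · exact ⟨a, ha, le_refl _, h⟩
      · exact ⟨b, hb, h, le_refl _⟩
    have hnonempty : ∀ U ∈ c, U.Nonempty := by
      intro U hU
      obtain ⟨z, hzA, rfl⟩ := hcS hU
      exact ⟨z, hsec_self z hzA⟩
    have hcomp : ∀ U ∈ c, IsCompact U := by
      intro U hU
      obtain ⟨z, hzA, rfl⟩ := hcS hU
      exact hAc.inter_right (hsecclosed z)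
    have hcl : ∀ U ∈ c, IsClosed U := fun U hU => (hcomp U hU).isClosed
    obtain ⟨zs, hzs⟩ :=
      IsCompact.nonempty_sInter_of_directed_nonempty_isCompact_isClosed hdir hnonempty hcomp hcl
    have hzsA : zs ∈ A := by
      obtain ⟨U, hU⟩ := hcne
      obtain ⟨z, hzA, rfl⟩ := hcS hU
      exact ((Set.mem_sInter.mp hzs) _ hU).1
    refine ⟨sec zs, ⟨zs, hzsA, rfl⟩, ?_⟩
    intro B hB
    obtain ⟨z, hzA, rfl⟩ := hcS hB
    have hzzs : z - zs ∈ P := ((Set.mem_sInter.mp hzs) _ hB).2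
    exact hsec_mono zs z hzzs
  obtain ⟨y0, hy0A⟩ := hAne
  obtain ⟨m, hmsub, hmin⟩ := zorn_superset_nonempty S hkey (sec y0) ⟨y0, hy0A, rfl⟩
  obtain ⟨e, heA, rfl⟩ := hmin.prop
  refine ⟨e, ⟨heA.1, ?_⟩, heA.2⟩
  rw [image_sub_eq]
  apply Set.eq_singleton_iff_unique_mem.mpr
  refine ⟨⟨by simp [h0], heA.1⟩, ?_⟩
  rintro w ⟨hew, hwK⟩
  -- w ∈ K, e - w ∈ P; then w ∈ A and sec w ⊆ sec e, so sec w = sec e by minimality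
  have hwA : w ∈ A := by
    refine ⟨hwK, ?_⟩
    have := cone_add hconv hcone heA.2 hew
    have h2 : y - e + (e - w) = y - w := by abel
    rw [h2] at this
    exact this
  have hsub : sec w ⊆ sec e := hsec_mono w e hew
  have heq : sec w = sec e := hmin.eq_of_subset ⟨w, hwA, rfl⟩ hsub
  have hemem : e ∈ sec w := by rw [heq]; exact hsec_self e heA
  exact hantisym w e hemem.2 hew

theorem stmt15_aux (P C : Set EE)
    (hPconv : Convex ℝ P) (hPcone : ∀ (c : ℝ), 0 ≤ c → ∀ x ∈ P, c • x ∈ P)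
    (hPclosed : IsClosed P) (hP0 : (0 : EE) ∈ P)
    (hPpointed : P ∩ (-P) = {0}) (hPint : (interior P).Nonempty)
    (hCconv : Convex ℝ C) (hCcone : ∀ (c : ℝ), 0 ≤ c → ∀ x ∈ C, c • x ∈ C)
    (hCclosed : IsClosed C) (hC0 : (0 : EE) ∈ C)
    (hCpointed : C ∩ (-C) = {0}) (hCint : (interior C).Nonempty)
    (hPC : P ⊆ interior C ∪ {0}) :
    ∃ M : ℝ, 0 ≤ M ∧ ∀ K1 K2 : Set EE,
      K1.Nonempty → IsCompact K1 → K2.Nonempty → IsCompact K2 →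
      minimalSet K1 P = minimalSet K1 C → minimalSet K2 P = minimalSet K2 C →
      Metric.hausdorffDist (minimalSet K1 P) (minimalSet K2 P) ≤
        M * Metric.hausdorffDist K1 K2 := by
  by_cases hPtriv : ∀ x ∈ P, x = (0:EE)
  · -- trivial ordering cone: minimalSet K P = K
    have hPeq : P = {(0:EE)} := Set.Subset.antisymm (fun x hx => hPtriv x hx) (by simp [hP0])
    have hmin : ∀ K : Set EE, minimalSet K P = K := by
      intro K
      ext z
      simp only [minimalSet, Set.mem_setOf_eq]
      constructor
      · exact fun h => h.1
      · intro hz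
        refine ⟨hz, ?_⟩
        rw [image_sub_eq, hPeq]
        have h1 : {x : EE | z - x ∈ ({0}:Set EE)} = {z} := by
          ext x
          simp [sub_eq_zero, eq_comm]
        rw [h1]
        exact Set.inter_eq_self_of_subset_left (Set.singleton_subset_iff.mpr hz)
    refine ⟨1, zero_le_one, ?_⟩
    intro K1 K2 _ _ _ _ _ _
    rw [hmin K1, hmin K2, one_mul]
  · push_neg at hPtriv
    obtain ⟨x₀, hx₀P, hx₀ne⟩ := hPtriv
    have hx₀n : 0 < ‖x₀‖ := norm_pos_iff.mpr hx₀ne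
    -- 0 is not in the interior of C
    have h0ni : (0:EE) ∉ interior C := by
      intro h0i
      obtain ⟨ε, hε, hball⟩ := Metric.mem_nhds_iff.mp (isOpen_interior.mem_nhds h0i)
      set z := (ε / (2 * ‖x₀‖)) • x₀ with hzdef
      have hzn : ‖z‖ = ε / 2 := by
        rw [hzdef, norm_smul, Real.norm_eq_abs, abs_of_pos (by positivity)]
        field_simp [hx₀n.ne']
        try ring
      have hzC : z ∈ C := interior_subset (hball (by
        rw [Metric.mem_ball, dist_zero_right, hzn]; linarith))
      have hzC' : -z ∈ C := interior_subset (hball (by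
        rw [Metric.mem_ball, dist_zero_right, norm_neg, hzn]; linarith))
      have hmem : z ∈ C ∩ (-C) := ⟨hzC, by rwa [Set.mem_neg]⟩
      rw [hCpointed] at hmem
      have : z = 0 := hmem
      rw [this, norm_zero] at hzn
      linarith
    -- deep interior point of C
    obtain ⟨d, hd⟩ := hCint
    obtain ⟨ε, hε, hball⟩ := Metric.mem_nhds_iff.mp (isOpen_interior.mem_nhds hd)
    set r := ε / 2 with hrdef
    have hr : 0 < r := by positivity
    have hrball : Metric.closedBall d r ⊆ interior C :=
      (Metric.closedBall_subset_ball (by rw [hrdef]; linarith)).trans hball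
    -- fact A : deep points
    have factA : ∀ x ∈ C, ∀ u : EE, ‖u‖ ≤ r → (d + x + u ∈ C ∧ d + x + u ≠ 0) := by
      intro x hx u hu
      have hdu : d + u ∈ interior C := hrball (by
        rw [Metric.mem_closedBall, dist_eq_norm]
        simpa using hu)
      have hsum : d + x + u ∈ C := by
        have h1 := cone_add hCconv hCcone (interior_subset hdu) hx
        have h2 : d + u + x = d + x + u := by abel
        rwa [h2] at h1
      refine ⟨hsum, ?_⟩
      intro h0eq
      have hxneg : -x = d + u := by linear_combination (norm := module) -h0eq
      have hmem : x ∈ C ∩ (-C) := ⟨hx, by rw [Set.mem_neg, hxneg]; exact interior_subset hdu⟩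
      rw [hCpointed] at hmem
      have hx0 : x = (0:EE) := hmem
      rw [hx0, neg_zero] at hxneg
      exact h0ni (hxneg ▸ hdu)
    -- scaling invariance of the interior of C
    have hsmul_int : ∀ t : ℝ, 0 < t → ∀ z ∈ interior C, t • z ∈ interior C := by
      intro t ht z hz
      have hset : t • C = C := by
        apply Set.Subset.antisymm
        · rintro _ ⟨x, hx, rfl⟩
          exact hCcone t ht.le x hx
        · intro x hx
          exact ⟨t⁻¹ • x, hCcone t⁻¹ (inv_pos.mpr ht).le x hx, by
            simp only []
            rw [smul_inv_smul₀ ht.ne']⟩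
      have : t • z ∈ t • interior C := Set.smul_mem_smul_set hz
      rwa [← interior_smul₀ ht.ne' C, hset] at this
    -- the constant α
    set T := (interior C)ᶜ with hTdef
    have hTclosed : IsClosed T := isClosed_compl_iff.mpr isOpen_interior
    have hTne : T.Nonempty := ⟨0, h0ni⟩
    set S := P ∩ Metric.sphere (0:EE) 1 with hSdef
    have hScomp : IsCompact S := (isCompact_sphere (0:EE) 1).inter_left hPclosed
    have hSne : S.Nonempty := by
      refine ⟨‖x₀‖⁻¹ • x₀, hPcone _ (by positivity) _ hx₀P, ?_⟩
      rw [mem_sphere_zero_iff_norm, norm_smul, Real.norm_eq_abs, abs_of_pos (by positivity),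
        inv_mul_cancel₀ hx₀n.ne']
    obtain ⟨s₀, hs₀S, hs₀min⟩ := hScomp.exists_isMinOn hSne
      (Metric.continuous_infDist_pt T).continuousOn
    set α := Metric.infDist s₀ T with hαdef
    have hs₀int : s₀ ∈ interior C := by
      rcases hPC hs₀S.1 with h | h
      · exact h
      · exfalso
        have : s₀ = 0 := h
        have h1 := hs₀S.2
        rw [this, mem_sphere_zero_iff_norm, norm_zero] at h1
        norm_num at h1
    have hα : 0 < α := by
      rw [hαdef]
      refine (hTclosed.notMem_iff_infDist_pos hTne).mp ?_
      rw [hTdef]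
      simpa using hs₀int
    -- the norm bound
    have hB : ∀ c ∈ P, ∀ t : ℝ, 0 ≤ t → c - t • d ∉ C → ‖c‖ ≤ t * ‖d‖ / α := by
      intro c hc t ht hnot
      by_cases hc0 : c = 0
      · rw [hc0, norm_zero]
        positivity
      have hcn : 0 < ‖c‖ := norm_pos_iff.mpr hc0
      set s := ‖c‖⁻¹ • c with hsdef2
      have hsS : s ∈ S := by
        refine ⟨hPcone _ (by positivity) _ hc, ?_⟩
        rw [hsdef2, mem_sphere_zero_iff_norm, norm_smul, Real.norm_eq_abs,
          abs_of_pos (by positivity), inv_mul_cancel₀ hcn.ne']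
      set w := ‖c‖⁻¹ • (c - t • d) with hwdef
      have hwT : w ∈ T := by
        rw [hTdef, Set.mem_compl_iff]
        intro hwint
        have h1 := hsmul_int ‖c‖ hcn w hwint
        rw [hwdef, smul_inv_smul₀ hcn.ne'] at h1
        exact hnot (interior_subset h1)
      have h7 : α ≤ Metric.infDist s T := isMinOn_iff.mp hs₀min s hsS
      have h8 : Metric.infDist s T ≤ dist s w := Metric.infDist_le_dist_of_mem hwT
      have h9 : dist s w = ‖c‖⁻¹ * (t * ‖d‖) := by
        rw [dist_eq_norm]
        have h1 : s - w = ‖c‖⁻¹ • (t • d) := by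
          rw [hsdef2, hwdef, ← smul_sub]
          congr 1
          abel
        rw [h1, norm_smul, norm_smul, Real.norm_eq_abs, Real.norm_eq_abs,
          abs_of_pos (inv_pos.mpr hcn), abs_of_nonneg ht]
      rw [le_div_iff₀ hα]
      have h10 : α ≤ ‖c‖⁻¹ * (t * ‖d‖) := le_trans h7 (h9 ▸ h8)
      have h11 := mul_le_mul_of_nonneg_left h10 hcn.le
      rwa [← mul_assoc, mul_inv_cancel₀ hcn.ne', one_mul] at h11
    -- the constant M
    set M := 1 + 2 * ‖d‖ / (r * α) with hMdef
    have hM0 : 0 ≤ M := by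
      have h1 : 0 ≤ 2 * ‖d‖ / (r * α) := div_nonneg (by positivity) (mul_pos hr hα).le
      rw [hMdef]; linarith
    -- the key one-sided estimate
    have hkey : ∀ K1 K2 : Set EE, K1.Nonempty → IsCompact K1 → K2.Nonempty → IsCompact K2 →
        minimalSet K1 P = minimalSet K1 C → minimalSet K2 P = minimalSet K2 C →
        0 < Metric.hausdorffDist K1 K2 →
        ∀ y ∈ minimalSet K1 P, ∃ e ∈ minimalSet K2 P,
          dist y e ≤ M * Metric.hausdorffDist K1 K2 := by
      intro K1 K2 hne1 hK1 hne2 hK2 hEq1 hEq2 hl y hy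
      set l := Metric.hausdorffDist K1 K2 with hldef
      have hedist : Metric.hausdorffEDist K1 K2 ≠ ⊤ :=
        Metric.hausdorffEdist_ne_top_of_nonempty_of_bounded hne1 hne2 hK1.isBounded hK2.isBounded
      have hyK1 : y ∈ K1 := hy.1
      have h1 : Metric.infDist y K2 ≤ l := Metric.infDist_le_hausdorffDist_of_mem hyK1 hedist
      obtain ⟨y2, hy2K2, hy2d⟩ := hK2.exists_infDist_eq_dist hne2 y
      have hdyy2 : dist y y2 ≤ l := by rw [← hy2d]; exact h1
      obtain ⟨e, heMin, hce⟩ := ext_stable hPconv hPcone hPclosed hP0 hPpointed hK2 hy2K2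
      have heK2 : e ∈ K2 := heMin.1
      have h2 : Metric.infDist e K1 ≤ l := by
        have h3 := Metric.infDist_le_hausdorffDist_of_mem heK2
          (by rwa [Metric.hausdorffEDist_comm] at hedist)
        rwa [Metric.hausdorffDist_comm] at h3
      obtain ⟨y1, hy1K1, hy1d⟩ := hK1.exists_infDist_eq_dist hne1 e
      have hdey1 : dist e y1 ≤ l := by rw [← hy1d]; exact h2
      set c := y2 - e with hcdef
      set t := 2 * l / r with htdef
      have ht : 0 < t := by positivity
      have hnotC : c - t • d ∉ C := by
        intro hq
        set q := c - t • d with hqdef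
        set u := (y - y2) + (e - y1) with hudef
        have hu : ‖u‖ ≤ 2 * l := by
          calc ‖u‖ ≤ ‖y - y2‖ + ‖e - y1‖ := norm_add_le _ _
          _ ≤ l + l := add_le_add (by rw [← dist_eq_norm]; exact hdyy2)
              (by rw [← dist_eq_norm]; exact hdey1)
          _ = 2 * l := by ring
        have htinv : ‖t⁻¹ • u‖ ≤ r := by
          rw [norm_smul, Real.norm_eq_abs, abs_of_pos (inv_pos.mpr ht)]
          have h4 : t⁻¹ * ‖u‖ ≤ t⁻¹ * (2 * l) :=
            mul_le_mul_of_nonneg_left hu (inv_pos.mpr ht).le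
          have h5 : t⁻¹ * (2 * l) = r := by
            rw [htdef]
            field_simp
          linarith
        have hqC : t⁻¹ • q ∈ C := hCcone t⁻¹ (inv_pos.mpr ht).le _ hq
        obtain ⟨hvC, hvne⟩ := factA _ hqC _ htinv
        have hyy1 : y - y1 = t • (d + t⁻¹ • q + t⁻¹ • u) := by
          rw [smul_add, smul_add, smul_inv_smul₀ ht.ne', smul_inv_smul₀ ht.ne', hqdef, hudef,
            hcdef]
          module
        have hC1 : y - y1 ∈ C := by
          rw [hyy1]
          exact hCcone t ht.le _ hvC
        have hne0 : y - y1 ≠ 0 := by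
          rw [hyy1]
          exact smul_ne_zero ht.ne' hvne
        have hyC : y ∈ minimalSet K1 C := hEq1 ▸ hy
        have h6 := hyC.2
        rw [image_sub_eq] at h6
        have h7 : y1 ∈ ({x | y - x ∈ C} ∩ K1) := ⟨hC1, hy1K1⟩
        rw [h6, Set.mem_singleton_iff] at h7
        rw [h7, sub_self] at hne0
        exact hne0 rfl
      have hcP : c ∈ P := hce
      have hcnorm : ‖c‖ ≤ t * ‖d‖ / α := hB c hcP t ht.le hnotC
      have hfin : t * ‖d‖ / α = 2 * ‖d‖ / (r * α) * l := by
        rw [htdef]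
        field_simp
        try ring
      refine ⟨e, heMin, ?_⟩
      have hde : dist y2 e = ‖c‖ := by rw [dist_eq_norm, hcdef]
      calc dist y e ≤ dist y y2 + dist y2 e := dist_triangle _ _ _
        _ ≤ l + ‖c‖ := add_le_add hdyy2 (le_of_eq hde)
        _ ≤ l + 2 * ‖d‖ / (r * α) * l := by rw [← hfin]; linarith
        _ = M * l := by rw [hMdef]; ring
    refine ⟨M, hM0, ?_⟩
    intro K1 K2 hne1 hK1 hne2 hK2 hEq1 hEq2
    rcases eq_or_lt_of_le (Metric.hausdorffDist_nonneg :
        0 ≤ Metric.hausdorffDist K1 K2) with hl | hl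
    · have hedist : EMetric.hausdorffEdist K1 K2 ≠ ⊤ :=
        Metric.hausdorffEdist_ne_top_of_nonempty_of_bounded hne1 hne2 hK1.isBounded hK2.isBounded
      have hK12 : K1 = K2 :=
        (IsClosed.hausdorffDist_zero_iff_eq hK1.isClosed hK2.isClosed hedist).mp hl.symm
      subst hK12
      simp [Metric.hausdorffDist_self_zero]
    · apply Metric.hausdorffDist_le_of_mem_dist (mul_nonneg hM0 hl.le)
      · intro x hx
        exact hkey K1 K2 hne1 hK1 hne2 hK2 hEq1 hEq2 hl x hx
      · intro x hx
        have hl' : 0 < Metric.hausdorffDist K2 K1 := by rwa [Metric.hausdorffDist_comm]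
        obtain ⟨e, he, hde⟩ := hkey K2 K1 hne2 hK2 hne1 hK1 hEq2 hEq1 hl' x hx
        exact ⟨e, he, by rwa [Metric.hausdorffDist_comm] at hde⟩

end StmtAux15

theorem stmt15 {p : ℕ} (P C : Set (EuclideanSpace ℝ (Fin p)))
    (hPconv : Convex ℝ P) (hPcone : ∀ (c : ℝ), 0 ≤ c → ∀ x ∈ P, c • x ∈ P)
    (hPclosed : IsClosed P) (hP0 : (0 : EuclideanSpace ℝ (Fin p)) ∈ P)
    (hPpointed : P ∩ (-P) = {0}) (hPint : (interior P).Nonempty)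
    (hCconv : Convex ℝ C) (hCcone : ∀ (c : ℝ), 0 ≤ c → ∀ x ∈ C, c • x ∈ C)
    (hCclosed : IsClosed C) (hC0 : (0 : EuclideanSpace ℝ (Fin p)) ∈ C)
    (hCpointed : C ∩ (-C) = {0}) (hCint : (interior C).Nonempty)
    (hPC : P ⊆ interior C ∪ {0}) :
    ∃ M : ℝ, 0 ≤ M ∧ ∀ K1 K2 : Set (EuclideanSpace ℝ (Fin p)),
      K1.Nonempty → IsCompact K1 → K2.Nonempty → IsCompact K2 →
      minimalSet K1 P = minimalSet K1 C → minimalSet K2 P = minimalSet K2 C →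
      Metric.hausdorffDist (minimalSet K1 P) (minimalSet K2 P) ≤
        M * Metric.hausdorffDist K1 K2 := by
  exact stmt15_aux P C hPconv hPcone hPclosed hP0 hPpointed hPint hCconv hCcone hCclosed hC0
    hCpointed hCint hPC
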